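/- Let M be a positroid with Grassmann necklace (I_1,...,I_n), let j be a non-fixed-point of its decorated permutation, and let (K_1,...,K_n) be the Grassmann necklace of M' = { H ∈ M : j ∈ H }. Then for all a ∈ [n]: K_a = I_a if j ∈ I_a, and K_a = (I_a \ {max_a(I_a \ I_j)}) ∪ {j} if j ∉ I_a. -/

import Mathlib

open Finset

/-- Position of `a` in the cyclic (linear) order starting at `t` on `Fin n`. -/
def cval {n : ℕ} (t a : Fin n) : ℕ := ((a - t : Fin n) : ℕ)

/-- Gale order on finsets of `Fin n` induced by the linear order with key `f`:
compare the sorted lists of keys coordinatewise. -/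
def galeLEKey {n : ℕ} (f : Fin n → ℕ) (A B : Finset (Fin n)) : Prop :=
  List.Forall₂ (· ≤ ·) ((A.image f).sort (· ≤ ·)) ((B.image f).sort (· ≤ ·))

/-- Gale order `≤_t` induced by the cyclic order starting at `t`. -/
def galeLE {n : ℕ} (t : Fin n) (A B : Finset (Fin n)) : Prop :=
  galeLEKey (cval t) A B

/-- The set of maximal elements of `D` w.r.t. `≤_a` (a singleton when `D` is nonempty). -/
def cmax {n : ℕ} (a : Fin n) (D : Finset (Fin n)) : Finset (Fin n) :=
  D.filter (fun x => ∀ y ∈ D, cval a y ≤ cval a x)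

/-- The set of minimal elements of `D` w.r.t. `≤_a` (a singleton when `D` is nonempty). -/
def cmin {n : ℕ} (a : Fin n) (D : Finset (Fin n)) : Finset (Fin n) :=
  D.filter (fun x => ∀ y ∈ D, cval a x ≤ cval a y)

/-- A Grassmann necklace on `[n]`. -/
def IsGrassmannNecklace {n : ℕ} [NeZero n] (I : Fin n → Finset (Fin n)) : Prop :=
  ∀ i : Fin n,
    (i ∈ I i → ∃ j : Fin n, I (i + 1) = insert j (I i \ {i})) ∧
    (i ∉ I i → I (i + 1) = I i)

/-- A decorated permutation: a permutation with fixed points colored by `1` or `-1`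
(non-fixed points carry the dummy color `1`). -/
structure DecoratedPerm (n : ℕ) where
  π : Equiv.Perm (Fin n)
  col : Fin n → ℤ
  col_fixed : ∀ i, π i = i → col i = 1 ∨ col i = -1
  col_nonfixed : ∀ i, π i ≠ i → col i = 1

/-- The Grassmann necklace associated to a decorated permutation:
`I_r = { i : i <_r π⁻¹(i), or π(i) = i and col(i) = -1 }`. -/
def necklaceOf {n : ℕ} (P : DecoratedPerm n) : Fin n → Finset (Fin n) :=
  fun r => Finset.univ.filter
    (fun i => cval r i < cval r (P.π.symm i) ∨ (P.π i = i ∧ P.col i = -1))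

/-- The forward map from Grassmann necklaces to decorated permutations:
`P` corresponds to the necklace `I`. -/
def Corresponds {n : ℕ} [NeZero n] (I : Fin n → Finset (Fin n)) (P : DecoratedPerm n) : Prop :=
  ∀ i : Fin n,
    ((I (i + 1) = I i ∧ i ∉ I i) → (P.π i = i ∧ P.col i = 1)) ∧
    ((I (i + 1) = I i ∧ i ∈ I i) → (P.π i = i ∧ P.col i = -1)) ∧
    (∀ j : Fin n, j ≠ i → i ∈ I i → I (i + 1) = insert j (I i \ {i}) → P.π i = j)

/-- `phiSet I j a` is `{j}` if `j ∈ I_a`, and otherwise `{max_a (I_a \ I_j)}`. -/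
def phiSet {n : ℕ} (I : Fin n → Finset (Fin n)) (j a : Fin n) : Finset (Fin n) :=
  if j ∈ I a then {j} else cmax a (I a \ I j)

/-- One pass of the contraction algorithm (fuel-indexed; the loop walks `a ← a+1`). -/
def contractLoop {n : ℕ} [NeZero n] (π : Equiv.Perm (Fin n)) (j : Fin n) :
    ℕ → (Fin n → Fin n) → (Fin n → ℤ) → Fin n → Fin n →
      (Fin n → Fin n) × (Fin n → ℤ)
  | 0, μ, c, q, a => (Function.update μ a q, c)
  | fuel + 1, μ, c, q, a =>
    if π a = j then (Function.update μ a q, c)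
    else if q = a ∨ (cval (a + 1) q < cval (a + 1) (π a) ∧
                      cval (a + 1) (π a) < cval (a + 1) j) then
      contractLoop π j fuel (Function.update μ a q)
        (if q = a then Function.update c a 1 else c) (π a) (a + 1)
    else
      contractLoop π j fuel μ c q (a + 1)

/-- The contraction algorithm: output `(μ, col')` from `(π, col)` and `j`. -/
def contractAlg {n : ℕ} [NeZero n] (π : Equiv.Perm (Fin n)) (col : Fin n → ℤ) (j : Fin n) :
    (Fin n → Fin n) × (Fin n → ℤ) :=
  contractLoop π j n (Function.update (⇑π) j j) (Function.update col j 1) (π j) (j + 1)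

/-- One pass of the restriction algorithm (the loop walks `a ← a-1`). -/
def restrictLoop {n : ℕ} [NeZero n] (π : Equiv.Perm (Fin n)) (j : Fin n) :
    ℕ → (Fin n → Fin n) → (Fin n → ℤ) → Fin n → Fin n →
      (Fin n → Fin n) × (Fin n → ℤ)
  | 0, μ, c, q, a => (Function.update μ a q, c)
  | fuel + 1, μ, c, q, a =>
    if π a = j then (Function.update μ a q, c)
    else if q = a ∨ (cval a j < cval a (π a) ∧ cval a (π a) < cval a q) then
      restrictLoop π j fuel (Function.update μ a q)
        (if q = a then Function.update c a 1 else c) (π a) (a - 1)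
    else
      restrictLoop π j fuel μ c q (a - 1)

/-- The restriction algorithm: output `(μ, col')` from `(π, col)` and `j`. -/
def restrictAlg {n : ℕ} [NeZero n] (π : Equiv.Perm (Fin n)) (col : Fin n → ℤ) (j : Fin n) :
    (Fin n → Fin n) × (Fin n → ℤ) :=
  restrictLoop π j n (Function.update (⇑π) j j) (Function.update col j 1) (π j) (j - 1)

namespace CNF
variable {n : ℕ} [NeZero n]
open Fin.NatCast Fin.CommRing

omit [NeZero n] in
lemma cval_def (t x : Fin n) : cval t x = (x.val + (n - t.val)) % n := by
  simp [cval, Fin.sub_def, Nat.add_comm]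

lemma cval_lt (t x : Fin n) : cval t x < n := by
  rw [cval_def]; exact Nat.mod_lt _ (Nat.pos_of_ne_zero (NeZero.ne n))

omit [NeZero n] in
lemma cval_eq_ite (t x : Fin n) :
    cval t x = if t.val ≤ x.val then x.val - t.val else x.val + n - t.val := by
  rw [cval_def]
  have ht := t.isLt; have hx := x.isLt
  rcases le_or_gt t.val x.val with h | h
  · rw [if_pos h]
    have : x.val + (n - t.val) = (x.val - t.val) + n := by omega
    rw [this, Nat.add_mod_right, Nat.mod_eq_of_lt (by omega)]
  · rw [if_neg (by omega), Nat.mod_eq_of_lt (by omega)]; omega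

omit [NeZero n] in
lemma cval_inj (t : Fin n) : Function.Injective (cval t) := by
  intro x y h
  rw [cval_eq_ite, cval_eq_ite] at h
  have ht := t.isLt; have hx := x.isLt; have hy := y.isLt
  apply Fin.ext
  split_ifs at h <;> omega

omit [NeZero n] in
lemma cval_self (t : Fin n) : cval t t = 0 := by
  have ht := t.isLt
  rw [cval_def, show t.val + (n - t.val) = n by omega, Nat.mod_self]

omit [NeZero n] in
lemma cval_eq_zero_iff {t x : Fin n} : cval t x = 0 ↔ x = t := by
  constructor
  · intro h; exact cval_inj t (h.trans (cval_self t).symm)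
  · rintro rfl; exact cval_self _

lemma cval_add_nat (t : Fin n) (d : ℕ) (hd : d < n) : cval t (t + (d : Fin n)) = d := by
  have : (t + (d : Fin n)) - t = (d : Fin n) := by ring
  simp [cval, this, Fin.val_cast_of_lt hd]

omit [NeZero n] in
lemma cval_rebase_lt {t b x : Fin n} (h : cval t x < cval t b) :
    cval b x = cval t x + n - cval t b := by
  have ht := t.isLt; have hx := x.isLt; have hb := b.isLt
  simp only [cval_eq_ite] at *
  split_ifs at * <;> omega

omit [NeZero n] in
lemma cval_rebase_ge {t b x : Fin n} (h : cval t b ≤ cval t x) :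
    cval b x = cval t x - cval t b := by
  have ht := t.isLt; have hx := x.isLt; have hb := b.isLt
  simp only [cval_eq_ite] at *
  split_ifs at * <;> omega

variable {I : Fin n → Finset (Fin n)}

lemma step_mem (hI : IsGrassmannNecklace I) {x i : Fin n} (hx : x ∈ I i) (hxi : x ≠ i) :
    x ∈ I (i + 1) := by
  by_cases hii : i ∈ I i
  · obtain ⟨w, hw⟩ := (hI i).1 hii
    rw [hw]
    exact Finset.mem_insert_of_mem (by simp [hx, hxi])
  · rw [(hI i).2 hii]; exact hx

lemma walk_mem (hI : IsGrassmannNecklace I) {t x : Fin n} (hx : x ∈ I t) :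
    ∀ d : ℕ, d ≤ cval t x → x ∈ I (t + (d : Fin n))
  | 0, _ => by simpa using hx
  | (d+1), hd => by
    have hdn : d < n := lt_of_lt_of_le (Nat.lt_of_lt_of_le (Nat.lt_succ_self d) hd)
      (le_of_lt (cval_lt t x))
    have ih := walk_mem hI hx d (by omega)
    have hne : x ≠ t + (d : Fin n) := by
      intro h
      rw [h, cval_add_nat t d hdn] at hd
      omega
    have := step_mem hI ih hne
    have harith : (t + (d : Fin n)) + 1 = t + ((d+1 : ℕ) : Fin n) := by push_cast; ring
    rwa [harith] at this

lemma mem_of_cval_le (hI : IsGrassmannNecklace I) {t b x : Fin n} (hx : x ∈ I t)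
    (h : cval t b ≤ cval t x) : x ∈ I b := by
  have hb : b = t + ((cval t b : ℕ) : Fin n) := by
    have : ((cval t b : ℕ) : Fin n) = b - t := by
      simp [cval, Fin.cast_val_eq_self]
    rw [this]; ring
  rw [hb]
  exact walk_mem hI hx _ h

end CNF

namespace CNF2
open CNF
variable {n : ℕ} [NeZero n]

def cnt (t : Fin n) (c : ℕ) (A : Finset (Fin n)) : ℕ :=
  (A.filter (fun x => cval t x ≤ c)).card

variable {I : Fin n → Finset (Fin n)}

lemma cnt_I_le (hI : IsGrassmannNecklace I) (hcard : ∀ s s' : Fin n, (I s).card = (I s').card)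
    (t b : Fin n) (c : ℕ) : cnt t c (I b) ≤ cnt t c (I t) := by
  by_cases hdc : cval t b ≤ c
  · have hsub : (I t).filter (fun x => ¬ cval t x ≤ c) ⊆
        (I b).filter (fun x => ¬ cval t x ≤ c) := by
      intro x hx
      rw [Finset.mem_filter] at *
      exact ⟨mem_of_cval_le hI hx.1 (by have := hx.2; omega), hx.2⟩
    have h1 := Finset.card_filter_add_card_filter_not
      (s := I t) (p := fun x => cval t x ≤ c)
    have h2 := Finset.card_filter_add_card_filter_not
      (s := I b) (p := fun x => cval t x ≤ c)
    have h3 := Finset.card_le_card hsub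
    have hc := hcard t b
    unfold cnt
    omega
  · apply Finset.card_le_card
    intro x hx
    rw [Finset.mem_filter] at *
    refine ⟨mem_of_cval_le hI hx.1 ?_, hx.2⟩
    have hx2 := hx.2
    have hbx : cval b x = cval t x + n - cval t b := cval_rebase_lt (by omega)
    have h0 : cval t t = 0 := cval_self t
    have hbt : cval b t = n - cval t b := by
      have := cval_rebase_lt (t := t) (b := b) (x := t) (by omega)
      omega
    have := cval_lt t b
    omega

lemma cnt_split (a' : Fin n) (X : Finset (Fin n)) {c c1 : ℕ} (h : c ≤ c1) :
    cnt a' c1 X = cnt a' c X +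
      (X.filter (fun x => c < cval a' x ∧ cval a' x ≤ c1)).card := by
  have h1 := Finset.card_filter_add_card_filter_not
    (s := X.filter (fun x => cval a' x ≤ c1)) (p := fun x => cval a' x ≤ c)
  rw [Finset.filter_filter, Finset.filter_filter] at h1
  have e1 : X.filter (fun x => cval a' x ≤ c1 ∧ cval a' x ≤ c)
      = X.filter (fun x => cval a' x ≤ c) := by
    apply Finset.filter_congr; intro x _; constructor
    · exact fun hx => by omega
    · exact fun hx => by constructor <;> omega
  have e2 : X.filter (fun x => cval a' x ≤ c1 ∧ ¬ cval a' x ≤ c)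
      = X.filter (fun x => c < cval a' x ∧ cval a' x ≤ c1) := by
    apply Finset.filter_congr; intro x _; constructor
    · exact fun hx => by omega
    · exact fun hx => by constructor <;> omega
  rw [e1, e2] at h1
  unfold cnt
  omega

lemma filter_cval_eq (a' : Fin n) (X : Finset (Fin n)) (j0 : Fin n) :
    (X.filter (fun x => cval a' x = cval a' j0)).card = if j0 ∈ X then 1 else 0 := by
  have : X.filter (fun x => cval a' x = cval a' j0) = if j0 ∈ X then {j0} else ∅ := by
    split_ifs with hj
    · apply Finset.ext; intro x
      simp only [Finset.mem_filter, Finset.mem_singleton]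
      constructor
      · rintro ⟨_, hx⟩; exact cval_inj a' hx
      · rintro rfl; exact ⟨hj, rfl⟩
    · rw [Finset.filter_eq_empty_iff]
      intro x hx hc
      exact hj (cval_inj a' hc ▸ hx)
  rw [this]
  split_ifs <;> simp

lemma cnt_le_card (t : Fin n) (c : ℕ) (X : Finset (Fin n)) : cnt t c X ≤ X.card :=
  Finset.card_le_card (Finset.filter_subset _ _)

lemma cnt_compl (t : Fin n) (c : ℕ) (X : Finset (Fin n)) :
    cnt t c X + (X.filter (fun x => ¬ cval t x ≤ c)).card = X.card :=
  Finset.card_filter_add_card_filter_not (s := X) (p := fun x => cval t x ≤ c)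

end CNF2

namespace CNF3
open CNF CNF2
variable {n : ℕ} [NeZero n]

lemma forall₂_iff_counts : ∀ (l1 l2 : List ℕ), l1.Pairwise (· ≤ ·) → l2.Pairwise (· ≤ ·) →
    (List.Forall₂ (· ≤ ·) l1 l2 ↔
      (l1.length = l2.length ∧ ∀ c, (l2.filter (· ≤ c)).length ≤ (l1.filter (· ≤ c)).length))
  | [], [] => by simp
  | [], b :: l2 => by
      simp only [List.forall₂_nil_left_iff]
      intro _ _
      constructor
      · intro h; simp at h
      · rintro ⟨h, -⟩; simp at h
  | a :: l1, [] => by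
      simp only [List.forall₂_nil_right_iff]
      intro _ _
      constructor
      · intro h; simp at h
      · rintro ⟨h, -⟩; simp at h
  | a :: l1, b :: l2 => by
      intro h1 h2
      have h1' := h1.of_cons
      have h2' := h2.of_cons
      rw [List.forall₂_cons, forall₂_iff_counts l1 l2 h1' h2']
      constructor
      · rintro ⟨hab, hlen, hcnt⟩
        refine ⟨by simp [hlen], fun c => ?_⟩
        simp only [List.filter_cons]
        by_cases hbc : b ≤ c
        · have hac : a ≤ c := le_trans hab hbc
          simp [hbc, hac, decide_eq_true_eq]
          exact hcnt c
        · have h20 : (l2.filter (fun x => decide (x ≤ c))).length = 0 := by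
            rw [List.length_eq_zero_iff, List.filter_eq_nil_iff]
            intro x hx
            have := (List.pairwise_cons.1 h2).1 x hx
            simp only [decide_eq_true_eq]; omega
          by_cases hac : a ≤ c <;> simp [hbc, hac, h20]
      · rintro ⟨hlen, hcnt⟩
        have hab : a ≤ b := by
          have := hcnt b
          simp only [List.filter_cons, decide_eq_true_eq] at this
          rw [if_pos (by simp)] at this
          by_contra hab
          push_neg at hab
          have h0 : ∀ x ∈ a :: l1, ¬ (x ≤ b) := by
            intro x hx
            rcases List.mem_cons.1 hx with rfl | hx
            · omega
            · have := (List.pairwise_cons.1 h1).1 x hx; omega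
          have : ((a :: l1).filter (fun x => decide (x ≤ b))).length = 0 := by
            rw [List.length_eq_zero_iff, List.filter_eq_nil_iff]
            intro x hx; simpa using h0 x hx
          simp only [List.filter_cons] at this
          split at this <;> simp_all
        refine ⟨hab, by simpa using hlen, fun c => ?_⟩
        have := hcnt c
        simp only [List.filter_cons, decide_eq_true_eq] at this
        by_cases hac : a ≤ c
        · by_cases hbc : b ≤ c
          · rw [if_pos (by simpa), if_pos (by simpa)] at this
            simpa using this
          · have : (l2.filter (fun x => decide (x ≤ c))).length = 0 := by
              rw [List.length_eq_zero_iff, List.filter_eq_nil_iff]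
              intro x hx
              have := (List.pairwise_cons.1 h2).1 x hx
              simp only [decide_eq_true_eq]; omega
            simp [this]
        · have hbc : ¬ b ≤ c := by omega
          have h10 : (l1.filter (fun x => decide (x ≤ c))).length = 0 := by
            rw [List.length_eq_zero_iff, List.filter_eq_nil_iff]
            intro x hx
            have := (List.pairwise_cons.1 h1).1 x hx
            simp only [decide_eq_true_eq]; omega
          rw [if_neg (by simpa using hbc), if_neg (by simpa using hac), h10] at this
          omega

lemma filter_sort_length (s : Finset ℕ) (p : ℕ → Prop) [DecidablePred p] :
    ((s.sort (· ≤ ·)).filter (fun x => decide (p x))).length = (s.filter p).card := by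
  have hperm := (Finset.sort_perm_toList s (· ≤ ·)).filter (fun x => decide (p x))
  rw [hperm.length_eq]
  have : ((s.toList.filter (fun x => decide (p x)) : List ℕ) : Multiset ℕ)
      = Multiset.filter p (↑s.toList) := by
    rw [← Multiset.filter_coe]
  rw [show (s.toList.filter (fun x => decide (p x))).length
      = Multiset.card (Multiset.filter p (↑s.toList)) by rw [← this]; rfl]
  rw [Finset.toList, Multiset.coe_toList]
  rfl

omit [NeZero n] in
lemma galeLE_iff (t : Fin n) (A B : Finset (Fin n)) :
    galeLE t A B ↔ (A.card = B.card ∧ ∀ c, cnt t c B ≤ cnt t c A) := by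
  unfold galeLE galeLEKey
  rw [forall₂_iff_counts _ _ (Finset.pairwise_sort _ _) (Finset.pairwise_sort _ _)]
  have hlen : ∀ C : Finset (Fin n), ((C.image (cval t)).sort (· ≤ ·)).length = C.card := by
    intro C
    rw [Finset.length_sort, Finset.card_image_of_injective _ (cval_inj t)]
  have hflt : ∀ (C : Finset (Fin n)) (c : ℕ),
      (((C.image (cval t)).sort (· ≤ ·)).filter (· ≤ c)).length = cnt t c C := by
    intro C c
    rw [show ((· ≤ c) : ℕ → Bool) = (fun x => decide (x ≤ c)) from rfl]
    rw [filter_sort_length (C.image (cval t)) (fun x => x ≤ c)]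
    rw [Finset.filter_image]
    rw [Finset.card_image_of_injective _ (cval_inj t)]
    rfl
  rw [hlen, hlen]
  constructor
  · rintro ⟨h1, h2⟩; exact ⟨h1, fun c => by rw [← hflt, ← hflt]; exact h2 c⟩
  · rintro ⟨h1, h2⟩; exact ⟨h1, fun c => by rw [hflt, hflt]; exact h2 c⟩

lemma forall₂_antisymm : ∀ (l1 l2 : List ℕ), List.Forall₂ (· ≤ ·) l1 l2 →
    List.Forall₂ (· ≤ ·) l2 l1 → l1 = l2
  | [], [], _, _ => rfl
  | a :: l1, b :: l2, h1, h2 => by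
    rw [List.forall₂_cons] at h1 h2
    rw [forall₂_antisymm l1 l2 h1.2 h2.2, le_antisymm h1.1 h2.1]

omit [NeZero n] in
lemma galeLE_antisymm {t : Fin n} {A B : Finset (Fin n)} (h1 : galeLE t A B)
    (h2 : galeLE t B A) : A = B := by
  unfold galeLE galeLEKey at h1 h2
  have heq := forall₂_antisymm _ _ h1 h2
  have himg : A.image (cval t) = B.image (cval t) := by
    have ha := Finset.sort_toFinset (A.image (cval t)) (· ≤ ·)
    have hb := Finset.sort_toFinset (B.image (cval t)) (· ≤ ·)
    rw [← ha, ← hb, heq]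
  exact Finset.image_injective (cval_inj t) himg

end CNF3

/-- the Grassmann necklace `(K_1,…,K_n)` of `M' = {H ∈ M : j ∈ H}` satisfies
`K_a = I_a` when `j ∈ I_a` and `K_a = (I_a \ {max_a(I_a \ I_j)}) ∪ {j}` otherwise. -/
theorem contraction_necklace_formula (n : ℕ) [NeZero n] (I : Fin n → Finset (Fin n))
    (hI : IsGrassmannNecklace I) (j : Fin n)
    (hj : I (j + 1) ≠ I j)  -- `j` is not a fixed point of the decorated permutation
    (K : Fin n → Finset (Fin n))
    -- `K_a` is the `≤_a`-minimal basis of `M'`: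
    (hK : ∀ a : Fin n,
      (j ∈ K a ∧ ∀ t : Fin n, galeLE t (I t) (K a)) ∧
      ∀ H : Finset (Fin n), (j ∈ H ∧ ∀ t : Fin n, galeLE t (I t) H) → galeLE a (K a) H) :
    ∀ a : Fin n,
      (j ∈ I a → K a = I a) ∧
      (j ∉ I a → K a = insert j (I a \ cmax a (I a \ I j))) := by

  intro a
  classical
  have hcard : ∀ s s' : Fin n, (I s).card = (I s').card := by
    intro s s'
    have h1 := ((CNF3.galeLE_iff s (I s) (K j)).1 ((hK j).1.2 s)).1
    have h2 := ((CNF3.galeLE_iff s' (I s') (K j)).1 ((hK j).1.2 s')).1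
    rw [h1, h2]
  have hMI : ∀ b t : Fin n, galeLE t (I t) (I b) := by
    intro b t
    rw [CNF3.galeLE_iff]
    exact ⟨hcard t b, fun c => CNF2.cnt_I_le hI hcard t b c⟩
  have hjj : j ∈ I j := by
    by_contra h
    exact hj ((hI j).2 h)
  constructor
  · intro hja
    have g1 : galeLE a (K a) (I a) := (hK a).2 (I a) ⟨hja, fun t => hMI a t⟩
    have g2 : galeLE a (I a) (K a) := (hK a).1.2 a
    exact CNF3.galeLE_antisymm g1 g2
  · intro hja
    have hjD : j ∈ I j \ I a := Finset.mem_sdiff.2 ⟨hjj, hja⟩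
    have hDEcard : (I a \ I j).card = (I j \ I a).card := Finset.card_sdiff_comm (hcard a j)
    have hDne : (I a \ I j).Nonempty := by
      rw [← Finset.card_pos, hDEcard, Finset.card_pos]
      exact ⟨j, hjD⟩
    obtain ⟨m, hmD, hmax⟩ := Finset.exists_max_image (I a \ I j) (cval a) hDne
    have hmIa : m ∈ I a := (Finset.mem_sdiff.1 hmD).1
    have hmIj : m ∉ I j := (Finset.mem_sdiff.1 hmD).2
    have hja0 : j ≠ a := by rintro rfl; exact hja hjj
    have hpj0 : 0 < cval a j := by
      rcases Nat.eq_zero_or_pos (cval a j) with h | h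
    -- hpj0 cases
      · exact absurd (CNF.cval_eq_zero_iff.1 h) hja0
      · exact h
    have hpjn := CNF.cval_lt a j
    have hpmn := CNF.cval_lt a m
    have hpmpj : cval a m < cval a j := by
      by_contra h
      push_neg at h
      exact hmIj (CNF.mem_of_cval_le hI hmIa h)
    have hE : ∀ y, y ∈ I j → y ∉ I a → cval a j ≤ cval a y := by
      intro y hyj hya
      by_contra h
      push_neg at h
      apply hya
      apply CNF.mem_of_cval_le hI hyj
      have h1 : cval j a = n - cval a j := by
        have h2 := CNF.cval_rebase_lt (t := a) (b := j) (x := a)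
          (by rw [CNF.cval_self]; omega)
        rw [CNF.cval_self] at h2; omega
      have h2 : cval j y = cval a y + n - cval a j :=
        CNF.cval_rebase_lt (t := a) (b := j) (x := y) h
      omega
    -- the candidate set
    set T := insert j ((I a).erase m) with hT
    have hjerase : j ∉ (I a).erase m := fun h => hja (Finset.mem_of_mem_erase h)
    have hTcard : T.card = (I a).card := by
      rw [hT, Finset.card_insert_of_notMem hjerase, Finset.card_erase_of_mem hmIa]
      have hpos : 0 < (I a).card := Finset.card_pos.2 ⟨m, hmIa⟩
      omega
    -- counting identity for T
    have hcntT : ∀ (t : Fin n) (c : ℕ),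
        CNF2.cnt t c T + (if cval t m ≤ c then 1 else 0)
          = CNF2.cnt t c (I a) + (if cval t j ≤ c then 1 else 0) := by
      intro t c
      unfold CNF2.cnt
      rw [hT, Finset.filter_insert, Finset.filter_erase]
      have hjnotin : j ∉ ((I a).filter (fun x => cval t x ≤ c)).erase m :=
        fun h => hja (Finset.mem_filter.1 (Finset.mem_of_mem_erase h)).1
      by_cases hjc : cval t j ≤ c
      · rw [if_pos hjc, if_pos hjc, Finset.card_insert_of_notMem hjnotin]
        by_cases hmc : cval t m ≤ c
        · have hm : m ∈ (I a).filter (fun x => cval t x ≤ c) :=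
            Finset.mem_filter.2 ⟨hmIa, hmc⟩
          have hpos : 0 < ((I a).filter (fun x => cval t x ≤ c)).card :=
            Finset.card_pos.2 ⟨m, hm⟩
          rw [if_pos hmc, Finset.card_erase_of_mem hm]
          omega
        · have hm : m ∉ (I a).filter (fun x => cval t x ≤ c) :=
            fun h => hmc (Finset.mem_filter.1 h).2
          rw [if_neg hmc, Finset.erase_eq_of_notMem hm]
      · rw [if_neg hjc, if_neg hjc]
        by_cases hmc : cval t m ≤ c
        · have hm : m ∈ (I a).filter (fun x => cval t x ≤ c) :=
            Finset.mem_filter.2 ⟨hmIa, hmc⟩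
          have hpos : 0 < ((I a).filter (fun x => cval t x ≤ c)).card :=
            Finset.card_pos.2 ⟨m, hm⟩
          rw [if_pos hmc, Finset.card_erase_of_mem hm]
          omega
        · have hm : m ∉ (I a).filter (fun x => cval t x ≤ c) :=
            fun h => hmc (Finset.mem_filter.1 h).2
          rw [if_neg hmc, Finset.erase_eq_of_notMem hm]
    -- decomposition lemma
    have hdec : ∀ (t : Fin n) (c : ℕ) (X Y : Finset (Fin n)),
        CNF2.cnt t c X = ((X.filter (fun x => cval t x ≤ c)).filter (fun x => x ∈ Y)).card
          + ((X \ Y).filter (fun x => cval t x ≤ c)).card := by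
      intro t c X Y
      have h1 := Finset.card_filter_add_card_filter_not
        (s := X.filter (fun x => cval t x ≤ c)) (p := fun x => x ∈ Y)
      have e : (X.filter (fun x => cval t x ≤ c)).filter (fun x => ¬ x ∈ Y)
          = (X \ Y).filter (fun x => cval t x ≤ c) := by
        ext x
        simp only [Finset.mem_filter, Finset.mem_sdiff]
        tauto
      rw [e] at h1
      unfold CNF2.cnt
      omega
    have hcomm : ∀ (t : Fin n) (c : ℕ),
        ((I a).filter (fun x => cval t x ≤ c)).filter (fun x => x ∈ I j)
          = ((I j).filter (fun x => cval t x ≤ c)).filter (fun x => x ∈ I a) := by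
      intro t c
      ext x
      simp only [Finset.mem_filter]
      tauto
    -- KEY X : intervals containing j but not m
    have hkeyX : ∀ (t : Fin n) (c : ℕ), cval t j ≤ c → ¬ (cval t m ≤ c) →
        CNF2.cnt t c (I a) < CNF2.cnt t c (I j) := by
      intro t c hjc hmc
      have hIa2 := hdec t c (I a) (I j)
      have hIj2 := hdec t c (I j) (I a)
      rw [hcomm t c] at hIa2
      have hptn := CNF.cval_lt a t
      have htrans : ∀ x : Fin n, cval t x =
          if cval a t ≤ cval a x then cval a x - cval a t else cval a x + n - cval a t := by
        intro x
        by_cases h : cval a t ≤ cval a x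
        · rw [if_pos h]; exact CNF.cval_rebase_ge h
        · rw [if_neg h]; exact CNF.cval_rebase_lt (by omega)
      have hjt := htrans j
      have hmt := htrans m
      have hkey2 : ((I a \ I j).filter (fun x => cval t x ≤ c)).card
          < ((I j \ I a).filter (fun x => cval t x ≤ c)).card := by
        by_cases hcase : cval a t + c < n
        · have hptpj : cval a t ≤ cval a j := by
            by_contra h
            push_neg at h
            rw [if_neg (by omega)] at hjt
            omega
          have hpmpt : cval a m < cval a t := by
            by_contra h
            push_neg at h
            rw [if_pos h] at hmt
            rw [if_pos hptpj] at hjt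
            omega
          have hD0 : (I a \ I j).filter (fun x => cval t x ≤ c) = ∅ := by
            rw [Finset.filter_eq_empty_iff]
            intro y hyD
            have h1 := hmax y hyD
            have h2 := htrans y
            rw [if_neg (by omega)] at h2
            omega
          have hjE : j ∈ (I j \ I a).filter (fun x => cval t x ≤ c) :=
            Finset.mem_filter.2 ⟨hjD, hjc⟩
          rw [hD0]
          simpa using Finset.card_pos.2 ⟨j, hjE⟩
        · push_neg at hcase
          have hpmpt : cval a m < cval a t := by
            by_contra h
            push_neg at h
            rw [if_pos h] at hmt
            omega
          have hmgt : cval a t + c - n < cval a m := by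
            rw [if_neg (by omega)] at hmt
            omega
          have hptpj : cval a t ≤ cval a j := by
            by_contra h
            push_neg at h
            rw [if_neg (by omega)] at hjt
            omega
          have hEfull : (I j \ I a).filter (fun x => cval t x ≤ c) = I j \ I a := by
            apply Finset.filter_true_of_mem
            intro y hyE
            have h1 := hE y (Finset.mem_sdiff.1 hyE).1 (Finset.mem_sdiff.1 hyE).2
            have h2 := htrans y
            rw [if_pos (by omega)] at h2
            have h3 := CNF.cval_lt a y
            omega
          have hssub : (I a \ I j).filter (fun x => cval t x ≤ c) ⊂ I a \ I j := by
            refine ⟨Finset.filter_subset _ _, fun hsub => ?_⟩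
            have h1 := Finset.mem_filter.1 (hsub hmD)
            exact hmc h1.2
          have h4 := Finset.card_lt_card hssub
          rw [hEfull]
          omega
      omega
    -- KEY H : minimality direction
    have hkeyH : ∀ (H : Finset (Fin n)) (c : ℕ), (∀ t, galeLE t (I t) H) → j ∈ H →
        cval a m ≤ c → c < cval a j → CNF2.cnt a c H < CNF2.cnt a c (I a) := by
      intro H c hHM hjH hpmc hcpj
      have hHcard : (I a).card = H.card := ((CNF3.galeLE_iff a (I a) H).1 (hHM a)).1
      have hHle : ∀ (t : Fin n) (c' : ℕ), CNF2.cnt t c' H ≤ CNF2.cnt t c' (I t) :=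
        fun t c' => ((CNF3.galeLE_iff t (I t) H).1 (hHM t)).2 c'
      have h1 : CNF2.cnt a (cval a j - 1) H + 1 ≤ CNF2.cnt a (cval a j - 1) (I a) := by
        have hsplitH := CNF2.cnt_split a H (c := cval a j - 1) (c1 := cval a j) (by omega)
        have hsplitI := CNF2.cnt_split a (I a) (c := cval a j - 1) (c1 := cval a j) (by omega)
        have hpred : ∀ (X : Finset (Fin n)),
            X.filter (fun x => cval a j - 1 < cval a x ∧ cval a x ≤ cval a j)
              = X.filter (fun x => cval a x = cval a j) := by
          intro X
          apply Finset.filter_congr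
          intro x _
          constructor
          · intro hx; omega
          · intro hx; omega
        have heH : (H.filter (fun x => cval a j - 1 < cval a x ∧ cval a x ≤ cval a j)).card
            = 1 := by
          rw [hpred, CNF2.filter_cval_eq, if_pos hjH]
        have heI : ((I a).filter
            (fun x => cval a j - 1 < cval a x ∧ cval a x ≤ cval a j)).card = 0 := by
          rw [hpred, CNF2.filter_cval_eq, if_neg hja]
        have h2 := hHle a (cval a j)
        omega
      have hU : ∀ X : Finset (Fin n), CNF2.cnt j (n - cval a j + c) X
          + (X.filter (fun x => c < cval a x ∧ cval a x ≤ cval a j - 1)).card = X.card := by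
        intro X
        have h0 := CNF2.cnt_compl j (n - cval a j + c) X
        have e : X.filter (fun x => ¬ cval j x ≤ n - cval a j + c)
            = X.filter (fun x => c < cval a x ∧ cval a x ≤ cval a j - 1) := by
          apply Finset.filter_congr
          intro x _
          have hx := CNF.cval_lt a x
          by_cases hcase : cval a j ≤ cval a x
          · have h2 := CNF.cval_rebase_ge (t := a) (b := j) (x := x) hcase
            constructor
            · intro hcontra; exact absurd (by omega) hcontra
            · intro hc; omega
          · push_neg at hcase
            have h2 := CNF.cval_rebase_lt (t := a) (b := j) (x := x) hcase
            constructor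
            · intro hcontra
              constructor <;> omega
            · intro hc; omega
        rw [e] at h0
        exact h0
      have hJU : CNF2.cnt j (n - cval a j + c) (I j)
          ≤ CNF2.cnt j (n - cval a j + c) (I a) := by
        have hIa2 := hdec j (n - cval a j + c) (I a) (I j)
        have hIj2 := hdec j (n - cval a j + c) (I j) (I a)
        rw [hcomm j (n - cval a j + c)] at hIa2
        have hDfull : (I a \ I j).filter (fun x => cval j x ≤ n - cval a j + c)
            = I a \ I j := by
          apply Finset.filter_true_of_mem
          intro y hyD
          have h2 := hmax y hyD
          have h3 : cval a y < cval a j := by omega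
          have h4 := CNF.cval_rebase_lt (t := a) (b := j) (x := y) h3
          omega
        have hEle : ((I j \ I a).filter (fun x => cval j x ≤ n - cval a j + c)).card
            ≤ (I j \ I a).card := Finset.card_le_card (Finset.filter_subset _ _)
        rw [hDfull] at hIa2
        omega
      have h3 := hHle j (n - cval a j + c)
      have hUH := hU H
      have hUI := hU (I a)
      have hsH := CNF2.cnt_split a H (c := c) (c1 := cval a j - 1) (by omega)
      have hsI := CNF2.cnt_split a (I a) (c := c) (c1 := cval a j - 1) (by omega)
      omega
    -- T is in M
    have hTM : ∀ t : Fin n, galeLE t (I t) T := by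
      intro t
      rw [CNF3.galeLE_iff]
      refine ⟨(hcard t a).trans hTcard.symm, fun c => ?_⟩
      have hid := hcntT t c
      have hIle := CNF2.cnt_I_le hI hcard t a c
      by_cases hjc : cval t j ≤ c
      · by_cases hmc : cval t m ≤ c
        · rw [if_pos hjc, if_pos hmc] at hid
          omega
        · rw [if_pos hjc, if_neg hmc] at hid
          have h1 := hkeyX t c hjc hmc
          have h2 := CNF2.cnt_I_le hI hcard t j c
          omega
      · rw [if_neg hjc] at hid
        by_cases hmc : cval t m ≤ c
        · rw [if_pos hmc] at hid; omega
        · rw [if_neg hmc] at hid; omega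
    -- K a is below T in counts
    have hKaIa : (I a).card = (K a).card := ((CNF3.galeLE_iff a (I a) (K a)).1 ((hK a).1.2 a)).1
    have hTgeK : ∀ c, CNF2.cnt a c (K a) ≤ CNF2.cnt a c T := by
      intro c
      have hid := hcntT a c
      have hKle : CNF2.cnt a c (K a) ≤ CNF2.cnt a c (I a) :=
        ((CNF3.galeLE_iff a (I a) (K a)).1 ((hK a).1.2 a)).2 c
      by_cases hmc : cval a m ≤ c
      · by_cases hjc : cval a j ≤ c
        · rw [if_pos hmc, if_pos hjc] at hid
          omega
        · rw [if_pos hmc, if_neg hjc] at hid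
          have h1 := hkeyH (K a) c (hK a).1.2 (hK a).1.1 hmc (by omega)
          omega
      · rw [if_neg hmc] at hid
        by_cases hjc : cval a j ≤ c
        · rw [if_pos hjc] at hid; omega
        · rw [if_neg hjc] at hid; omega
    have g1 : galeLE a T (K a) := by
      rw [CNF3.galeLE_iff]
      exact ⟨hTcard.trans hKaIa, hTgeK⟩
    have g2 : galeLE a (K a) T := (hK a).2 T ⟨Finset.mem_insert_self j _, hTM⟩
    have hKT : K a = T := CNF3.galeLE_antisymm g2 g1
    have hcmax : cmax a (I a \ I j) = {m} := by
      apply Finset.ext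
      intro x
      simp only [cmax, Finset.mem_filter, Finset.mem_singleton]
      constructor
      · rintro ⟨hxD, hx⟩
        exact CNF.cval_inj a (le_antisymm (hmax x hxD) (hx m hmD))
      · rintro rfl
        exact ⟨hmD, hmax⟩
    rw [hKT, hcmax, ← Finset.erase_eq]
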